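/- Let ρ : Finset (Fin n) → ℕ be an injective rank function that is strictly monotone with respect to strict containment (A ⊊ B implies ρ(A) < ρ(B)) and values in {1,…,2ⁿ}. Define w(x) = Σ_{A ⊆ [n]} 2^{ρ(A)} · [|x ∩ A| even] for each outcome x ⊆ [n]. Then for any nonempty proper A ⊆ [n] with a ∈ A and b ∉ A, we have w(∅) > w({a}) but w({b}) < w({a,b}); consequently A is not separable under the order induced by w, so char(w) = {∅, [n]}. -/

import Mathlib

/-- The nonseparable utility `w(x) = Σ_A 2^{ρ(A)} [|x ∩ A| even]`. -/
def wvec {n : ℕ} (ρ : Finset (Fin n) → ℕ) (x : Finset (Fin n)) : ℚ :=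
  ∑ A : Finset (Fin n), (2 : ℚ) ^ (ρ A) * (if Even (x ∩ A).card then 1 else 0)

lemma wvec_filter {n : ℕ} (ρ : Finset (Fin n) → ℕ) (x : Finset (Fin n)) :
    wvec ρ x = ∑ A ∈ Finset.univ.filter (fun A => Even ((x ∩ A).card)),
      (2 : ℚ) ^ (ρ A) := by
  rw [wvec, Finset.sum_filter]
  refine Finset.sum_congr rfl fun A _ => ?_
  split <;> simp

lemma key_gt {n : ℕ} (ρ : Finset (Fin n) → ℕ) (a : Fin n) :
    wvec ρ {a} < wvec ρ (∅ : Finset (Fin n)) := by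
  unfold wvec
  refine Finset.sum_lt_sum (fun A _ => ?_) ⟨{a}, Finset.mem_univ _, ?_⟩
  · apply mul_le_mul_of_nonneg_left _ (by positivity)
    simp only [Finset.empty_inter, Finset.card_empty, Even.zero, if_true]
    split <;> norm_num
  · simp only [Finset.inter_self, Finset.card_singleton, Finset.empty_inter,
      Finset.card_empty, Even.zero, if_true, Nat.not_even_one, if_false, mul_zero, mul_one]
    positivity

lemma key_lt {n : ℕ} (ρ : Finset (Fin n) → ℕ)
    (hmono : ∀ A B : Finset (Fin n), A ⊂ B → ρ A < ρ B)
    (a b : Fin n) (hab : a ≠ b) :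
    wvec ρ {b} < wvec ρ ({a, b} : Finset (Fin n)) := by
  have hpb : ∀ A : Finset (Fin n), Even ((({b} : Finset (Fin n)) ∩ A).card) ↔ b ∉ A := by
    intro A
    by_cases hb : b ∈ A <;>
      simp [Finset.singleton_inter_of_mem, Finset.singleton_inter_of_notMem, hb]
  have hpab : ∀ A : Finset (Fin n),
      Even ((({a, b} : Finset (Fin n)) ∩ A).card) ↔ (a ∈ A ↔ b ∈ A) := by
    intro A
    by_cases ha : a ∈ A <;> by_cases hb : b ∈ A <;>
      simp [Finset.insert_inter_of_mem, Finset.insert_inter_of_notMem,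
        Finset.singleton_inter_of_mem, Finset.singleton_inter_of_notMem, ha, hb,
        Finset.card_insert_of_notMem, hab, Nat.even_add_one]
  rw [wvec_filter, wvec_filter]
  have split1 : (Finset.univ.filter (fun A : Finset (Fin n) =>
      Even ((({b} : Finset (Fin n)) ∩ A).card))) =
      Finset.univ.filter (fun A => a ∈ A ∧ b ∉ A) ∪
      Finset.univ.filter (fun A => a ∉ A ∧ b ∉ A) := by
    ext A
    simp only [Finset.mem_filter, Finset.mem_union, Finset.mem_univ, true_and, hpb]
    tauto
  have split2 : (Finset.univ.filter (fun A : Finset (Fin n) =>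
      Even ((({a, b} : Finset (Fin n)) ∩ A).card))) =
      Finset.univ.filter (fun A => a ∈ A ∧ b ∈ A) ∪
      Finset.univ.filter (fun A => a ∉ A ∧ b ∉ A) := by
    ext A
    simp only [Finset.mem_filter, Finset.mem_union, Finset.mem_univ, true_and, hpab]
    tauto
  have hd1 : Disjoint (Finset.univ.filter (fun A : Finset (Fin n) => a ∈ A ∧ b ∉ A))
      (Finset.univ.filter (fun A => a ∉ A ∧ b ∉ A)) := by
    rw [Finset.disjoint_left]; intro A h1 h2; simp at h1 h2; tauto
  have hd2 : Disjoint (Finset.univ.filter (fun A : Finset (Fin n) => a ∈ A ∧ b ∈ A))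
      (Finset.univ.filter (fun A => a ∉ A ∧ b ∉ A)) := by
    rw [Finset.disjoint_left]; intro A h1 h2; simp at h1 h2; tauto
  rw [split1, split2, Finset.sum_union hd1, Finset.sum_union hd2]
  have hmain : ∑ A ∈ Finset.univ.filter (fun A : Finset (Fin n) => a ∈ A ∧ b ∉ A),
      (2:ℚ) ^ ρ A < ∑ A ∈ Finset.univ.filter (fun A => a ∈ A ∧ b ∈ A), (2:ℚ) ^ ρ A := by
    calc ∑ A ∈ Finset.univ.filter (fun A : Finset (Fin n) => a ∈ A ∧ b ∉ A), (2:ℚ) ^ ρ A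
        < ∑ A ∈ Finset.univ.filter (fun A : Finset (Fin n) => a ∈ A ∧ b ∉ A),
            (2:ℚ) ^ ρ (insert b A) := by
          refine Finset.sum_lt_sum_of_nonempty ⟨{a}, ?_⟩ (fun A hA => ?_)
          · simp [hab, Ne.symm hab]
          · simp only [Finset.mem_filter] at hA
            have : A ⊂ insert b A := Finset.ssubset_insert hA.2.2
            exact pow_lt_pow_right₀ one_lt_two (hmono _ _ this)
      _ = ∑ A ∈ (Finset.univ.filter (fun A : Finset (Fin n) => a ∈ A ∧ b ∉ A)).image
            (insert b), (2:ℚ) ^ ρ A := by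
          rw [Finset.sum_image]
          intro A hA A' hA' h
          simp only [Finset.mem_coe, Finset.mem_filter] at hA hA'
          have := congrArg (Finset.erase · b) h
          simpa [Finset.erase_insert hA.2.2, Finset.erase_insert hA'.2.2] using this
      _ ≤ ∑ A ∈ Finset.univ.filter (fun A : Finset (Fin n) => a ∈ A ∧ b ∈ A),
            (2:ℚ) ^ ρ A := by
          refine Finset.sum_le_sum_of_subset_of_nonneg ?_ (fun _ _ _ => by positivity)
          intro A hA
          simp only [Finset.mem_image, Finset.mem_filter] at hA ⊢
          obtain ⟨B, hB, rfl⟩ := hA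
          exact ⟨Finset.mem_univ _, Finset.mem_insert_of_mem hB.2.1, Finset.mem_insert_self _ _⟩
  linarith

theorem completely_nonseparable (n : ℕ) (ρ : Finset (Fin n) → ℕ)
    (hinj : Function.Injective ρ)
    (hmono : ∀ A B : Finset (Fin n), A ⊂ B → ρ A < ρ B)
    (hrange : ∀ A : Finset (Fin n), 1 ≤ ρ A ∧ ρ A ≤ 2 ^ n) :
    (∀ A : Finset (Fin n), A ≠ ∅ → A ≠ Finset.univ →
      ∀ a ∈ A, ∀ b ∉ A,
        wvec ρ (∅ : Finset (Fin n)) > wvec ρ {a} ∧ wvec ρ {b} < wvec ρ ({a, b})) ∧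
    (∀ A : Finset (Fin n), A ≠ ∅ → A ≠ Finset.univ →
      ¬ ∀ xS yS u v : Finset (Fin n), xS ⊆ A → yS ⊆ A → u ⊆ Aᶜ → v ⊆ Aᶜ →
          (wvec ρ (xS ∪ u) ≥ wvec ρ (yS ∪ u) ↔ wvec ρ (xS ∪ v) ≥ wvec ρ (yS ∪ v))) ∧
    {S : Finset (Fin n) |
        ∀ xS yS u v : Finset (Fin n), xS ⊆ S → yS ⊆ S → u ⊆ Sᶜ → v ⊆ Sᶜ →
          (wvec ρ (xS ∪ u) ≥ wvec ρ (yS ∪ u) ↔ wvec ρ (xS ∪ v) ≥ wvec ρ (yS ∪ v))}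
      = {∅, Finset.univ} := by
  have part1 : ∀ A : Finset (Fin n), A ≠ ∅ → A ≠ Finset.univ →
      ∀ a ∈ A, ∀ b ∉ A,
        wvec ρ (∅ : Finset (Fin n)) > wvec ρ {a} ∧ wvec ρ {b} < wvec ρ ({a, b}) := by
    intro A _ _ a ha b hb
    have hab : a ≠ b := fun h => hb (h ▸ ha)
    exact ⟨key_gt ρ a, key_lt ρ hmono a b hab⟩
  have part2 : ∀ A : Finset (Fin n), A ≠ ∅ → A ≠ Finset.univ →
      ¬ ∀ xS yS u v : Finset (Fin n), xS ⊆ A → yS ⊆ A → u ⊆ Aᶜ → v ⊆ Aᶜ →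
          (wvec ρ (xS ∪ u) ≥ wvec ρ (yS ∪ u) ↔ wvec ρ (xS ∪ v) ≥ wvec ρ (yS ∪ v)) := by
    intro A hne huniv h
    obtain ⟨a, ha⟩ := Finset.nonempty_iff_ne_empty.2 hne
    have hcne : Aᶜ ≠ ∅ := by
      intro hc
      exact huniv (by simpa using congrArg (·ᶜ) hc)
    obtain ⟨b, hb⟩ := Finset.nonempty_iff_ne_empty.2 hcne
    have hbA : b ∉ A := Finset.mem_compl.1 hb
    have hab : a ≠ b := fun h => hbA (h ▸ ha)
    have := h ∅ {a} ∅ {b} (Finset.empty_subset _) (Finset.singleton_subset_iff.2 ha)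
      (Finset.empty_subset _) (Finset.singleton_subset_iff.2 hb)
    simp only [Finset.union_empty, Finset.empty_union] at this
    have h1 := key_gt ρ a
    have h2 := key_lt ρ hmono a b hab
    have : wvec ρ ({b} : Finset (Fin n)) ≥ wvec ρ ({a} ∪ {b}) := this.1 (le_of_lt h1)
    rw [show ({a} ∪ {b} : Finset (Fin n)) = {a, b} from rfl] at this
    linarith
  refine ⟨part1, part2, ?_⟩
  ext S
  simp only [Set.mem_setOf_eq, Set.mem_insert_iff, Set.mem_singleton_iff]
  constructor
  · intro h
    by_contra hc
    push_neg at hc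
    exact part2 S hc.1.ne_empty hc.2 h
  · rintro (rfl | rfl)
    · intro xS yS u v hx hy _ _
      rw [Finset.subset_empty] at hx hy
      subst hx; subst hy
      exact ⟨fun _ => le_refl _, fun _ => le_refl _⟩
    · intro xS yS u v _ _ hu hv
      rw [Finset.compl_univ, Finset.subset_empty] at hu hv
      subst hu; subst hv
      exact Iff.rfl
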